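/- The Choi map Λ: M_3(ℂ) → M_3(ℂ) defined by Λ((a_{ij})) = (1/2)·[[a_{11}+a_{22}, −a_{12}, −a_{13}], [−a_{21}, a_{22}+a_{33}, −a_{23}], [−a_{31}, −a_{32}, a_{33}+a_{11}]] is a positive map: if A ∈ M_3(ℂ) is positive semidefinite, then Λ(A) is positive semidefinite. -/

import Mathlib

open scoped ComplexOrder

noncomputable section

/-- The (normalized) Choi map `Λ : M_3(ℂ) → M_3(ℂ)` of Eq. (7). -/
def choiMap (A : Matrix (Fin 3) (Fin 3) ℂ) : Matrix (Fin 3) (Fin 3) ℂ :=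
  (2 : ℂ)⁻¹ • !![A 0 0 + A 1 1, -A 0 1, -A 0 2;
                 -A 1 0, A 1 1 + A 2 2, -A 1 2;
                 -A 2 0, -A 2 1, A 2 2 + A 0 0]

lemma choi_step1 (x y z : ℝ) (hx : 0 ≤ x) (hy : 0 ≤ y) (hz : 0 ≤ z) :
    (2*x+y)*((2*y+z)*(2*z+x)) ≤ y*((2*y+z)*(2*z+x)) + z*((2*x+y)*(2*z+x)) + x*((2*x+y)*(2*y+z)) := by
  nlinarith [mul_nonneg hx (sq_nonneg (y-z)), mul_nonneg hy (sq_nonneg (z-x)),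
    mul_nonneg hz (sq_nonneg (x-y)), mul_nonneg hx (sq_nonneg (y-x)),
    mul_nonneg hy (sq_nonneg (z-y)), mul_nonneg hz (sq_nonneg (x-z)),
    mul_nonneg (mul_nonneg hx hy) hz]

lemma choi_s1 (x y z : ℝ) (hx : 0 ≤ x) (hy : 0 ≤ y) (hz : 0 ≤ z) :
    x*((2*y+z)*(2*z+x)) + y*((2*x+y)*(2*z+x)) + z*((2*x+y)*(2*y+z)) ≤ (2*x+y)*((2*y+z)*(2*z+x)) := by
  nlinarith [choi_step1 x y z hx hy hz]

lemma choi_cs_gen (a b c x y z d1 d2 d3 : ℝ) (h1 : 0 ≤ d1) (h2 : 0 ≤ d2) (h3 : 0 ≤ d3) :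
    d1*(d2*d3)*(a*x+b*y+c*z)^2 ≤
      (a^2*(d2*d3)+b^2*(d1*d3)+c^2*(d1*d2))*(d1*x^2+d2*y^2+d3*z^2) := by
  nlinarith [mul_nonneg h3 (sq_nonneg (a*d2*y - b*d1*x)),
             mul_nonneg h2 (sq_nonneg (a*d3*z - c*d1*x)),
             mul_nonneg h1 (sq_nonneg (b*d3*z - c*d2*y))]

lemma choi_key (a b c x y z : ℝ) :
    (a*x+b*y+c*z)^2 ≤ (2*a^2+b^2)*x^2 + (2*b^2+c^2)*y^2 + (2*c^2+a^2)*z^2 := by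
  rcases eq_or_lt_of_le (by positivity : (0:ℝ) ≤ (2*a^2+b^2)*((2*b^2+c^2)*(2*c^2+a^2))) with h0 | hpos
  · rcases mul_eq_zero.1 h0.symm with h1 | h23
    · have ha : a = 0 := by nlinarith [sq_nonneg a, sq_nonneg b]
      have hb : b = 0 := by nlinarith [sq_nonneg a, sq_nonneg b]
      subst ha; subst hb; nlinarith [sq_nonneg (c*z), sq_nonneg (c*y)]
    · rcases mul_eq_zero.1 h23 with h2 | h3
      · have hb : b = 0 := by nlinarith [sq_nonneg b, sq_nonneg c]
        have hc : c = 0 := by nlinarith [sq_nonneg b, sq_nonneg c]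
        subst hb; subst hc; nlinarith [sq_nonneg (a*x), sq_nonneg (a*z)]
      · have hc : c = 0 := by nlinarith [sq_nonneg c, sq_nonneg a]
        have ha : a = 0 := by nlinarith [sq_nonneg c, sq_nonneg a]
        subst ha; subst hc; nlinarith [sq_nonneg (b*y), sq_nonneg (b*x)]
  · have cs := choi_cs_gen a b c x y z (2*a^2+b^2) (2*b^2+c^2) (2*c^2+a^2)
      (by positivity) (by positivity) (by positivity)
    have hs := choi_s1 (a^2) (b^2) (c^2) (by positivity) (by positivity) (by positivity)
    have h2 : (a^2*((2*b^2+c^2)*(2*c^2+a^2))+b^2*((2*a^2+b^2)*(2*c^2+a^2))+c^2*((2*a^2+b^2)*(2*b^2+c^2)))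
        * ((2*a^2+b^2)*x^2 + (2*b^2+c^2)*y^2 + (2*c^2+a^2)*z^2)
        ≤ (2*a^2+b^2)*((2*b^2+c^2)*(2*c^2+a^2)) * ((2*a^2+b^2)*x^2 + (2*b^2+c^2)*y^2 + (2*c^2+a^2)*z^2) := by
      apply mul_le_mul_of_nonneg_right _ (by positivity)
      linarith [hs]
    exact le_of_mul_le_mul_left (by nlinarith [le_trans cs h2]) hpos

lemma choi_real6 (a b c x y z : ℝ) :
    2*(a*b*(x*y) + a*c*(x*z) + b*c*(y*z)) ≤
      (a^2+b^2)*x^2 + (b^2+c^2)*y^2 + (c^2+a^2)*z^2 := by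
  nlinarith [choi_key a b c x y z]

lemma choi_half_nonneg : (0:ℂ) ≤ (2:ℂ)⁻¹ := by
  rw [show ((2:ℂ)⁻¹) = (((2:ℝ)⁻¹ : ℝ) : ℂ) by push_cast; ring, Complex.zero_le_real]
  norm_num

lemma choi_ckey (a b c x1 x2 x3 : ℂ) :
    0 ≤ (starRingEnd ℂ) x1 * (((starRingEnd ℂ) a * a + (starRingEnd ℂ) b * b) * x1
          - (starRingEnd ℂ) a * b * x2 - (starRingEnd ℂ) a * c * x3)
      + (starRingEnd ℂ) x2 * (-((starRingEnd ℂ) b * a * x1)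
          + ((starRingEnd ℂ) b * b + (starRingEnd ℂ) c * c) * x2
          - (starRingEnd ℂ) b * c * x3)
      + (starRingEnd ℂ) x3 * (-((starRingEnd ℂ) c * a * x1) - (starRingEnd ℂ) c * b * x2
          + ((starRingEnd ℂ) c * c + (starRingEnd ℂ) a * a) * x3) := by
  have hE : (starRingEnd ℂ) x1 * (((starRingEnd ℂ) a * a + (starRingEnd ℂ) b * b) * x1
          - (starRingEnd ℂ) a * b * x2 - (starRingEnd ℂ) a * c * x3)
      + (starRingEnd ℂ) x2 * (-((starRingEnd ℂ) b * a * x1)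
          + ((starRingEnd ℂ) b * b + (starRingEnd ℂ) c * c) * x2
          - (starRingEnd ℂ) b * c * x3)
      + (starRingEnd ℂ) x3 * (-((starRingEnd ℂ) c * a * x1) - (starRingEnd ℂ) c * b * x2
          + ((starRingEnd ℂ) c * c + (starRingEnd ℂ) a * a) * x3)
      = Complex.ofReal ((Complex.normSq a + Complex.normSq b) * Complex.normSq x1
          + (Complex.normSq b + Complex.normSq c) * Complex.normSq x2
          + (Complex.normSq c + Complex.normSq a) * Complex.normSq x3
          - 2*(((starRingEnd ℂ) a * b * x2 * (starRingEnd ℂ) x1).re)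
          - 2*(((starRingEnd ℂ) a * c * x3 * (starRingEnd ℂ) x1).re)
          - 2*(((starRingEnd ℂ) b * c * x3 * (starRingEnd ℂ) x2).re)) := by
    apply Complex.ext <;>
    · simp [Complex.normSq_apply, Complex.mul_re, Complex.mul_im, Complex.conj_re, Complex.conj_im]
      ring
  rw [hE, Complex.zero_le_real]
  have h12 : ((starRingEnd ℂ) a * b * x2 * (starRingEnd ℂ) x1).re
      ≤ ‖a‖ * ‖b‖ * (‖x1‖ * ‖x2‖) := by
    refine le_of_le_of_eq (Complex.re_le_norm _) ?_
    simp [map_mul, Complex.norm_conj]; ring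
  have h13 : ((starRingEnd ℂ) a * c * x3 * (starRingEnd ℂ) x1).re
      ≤ ‖a‖ * ‖c‖ * (‖x1‖ * ‖x3‖) := by
    refine le_of_le_of_eq (Complex.re_le_norm _) ?_
    simp [map_mul, Complex.norm_conj]; ring
  have h23 : ((starRingEnd ℂ) b * c * x3 * (starRingEnd ℂ) x2).re
      ≤ ‖b‖ * ‖c‖ * (‖x2‖ * ‖x3‖) := by
    refine le_of_le_of_eq (Complex.re_le_norm _) ?_
    simp [map_mul, Complex.norm_conj]; ring
  have hr := choi_real6 (‖a‖) (‖b‖) (‖c‖)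
    (‖x1‖) (‖x2‖) (‖x3‖)
  simp only [Complex.normSq_eq_norm_sq]
  linarith [hr, h12, h13, h23]

/-- the Choi map is a positive map: it sends positive semidefinite matrices to
positive semidefinite matrices. -/
theorem stmt9 (A : Matrix (Fin 3) (Fin 3) ℂ) (hA : A.PosSemidef) : (choiMap A).PosSemidef := by
  obtain ⟨B, hB⟩ : ∃ B : Matrix (Fin 3) (Fin 3) ℂ, A = star B * B := by
    classical
    open scoped MatrixOrder in exact CStarAlgebra.nonneg_iff_eq_star_mul_self.mp hA.nonneg
  have hA' : ∀ i j, A i j = ∑ k : Fin 3, (starRingEnd ℂ) (B k i) * B k j := by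
    intro i j
    rw [hB]
    simp [Matrix.mul_apply, Matrix.star_apply]
  have hsa : ∀ i j, (starRingEnd ℂ) (A i j) = A j i := by
    intro i j
    conv_rhs => rw [← hA.1]
    simp [Matrix.conjTranspose_apply]
  rw [Matrix.posSemidef_iff_dotProduct_mulVec]
  constructor
  · ext i j
    rw [Matrix.conjTranspose_apply]
    fin_cases i <;> fin_cases j <;>
      simp [choiMap, Complex.star_def, map_add, map_neg, map_mul, hsa]
  · intro x
    have hsum : dotProduct (star x) (Matrix.mulVec (choiMap A) x)
        = ∑ k : Fin 3, (2:ℂ)⁻¹ *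
          ((starRingEnd ℂ) (x 0) * (((starRingEnd ℂ) (B k 0) * (B k 0)
              + (starRingEnd ℂ) (B k 1) * (B k 1)) * (x 0)
              - (starRingEnd ℂ) (B k 0) * (B k 1) * (x 1)
              - (starRingEnd ℂ) (B k 0) * (B k 2) * (x 2))
          + (starRingEnd ℂ) (x 1) * (-((starRingEnd ℂ) (B k 1) * (B k 0) * (x 0))
              + ((starRingEnd ℂ) (B k 1) * (B k 1) + (starRingEnd ℂ) (B k 2) * (B k 2)) * (x 1)
              - (starRingEnd ℂ) (B k 1) * (B k 2) * (x 2))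
          + (starRingEnd ℂ) (x 2) * (-((starRingEnd ℂ) (B k 2) * (B k 0) * (x 0))
              - (starRingEnd ℂ) (B k 2) * (B k 1) * (x 1)
              + ((starRingEnd ℂ) (B k 2) * (B k 2) + (starRingEnd ℂ) (B k 0) * (B k 0)) * (x 2))) := by
      simp [choiMap, dotProduct, Matrix.mulVec, Fin.sum_univ_three, hA',
        Complex.star_def, Finset.mul_sum, Finset.sum_mul]
      ring
    rw [hsum]
    apply Finset.sum_nonneg
    intro k _
    exact mul_nonneg choi_half_nonneg (choi_ckey (B k 0) (B k 1) (B k 2) (x 0) (x 1) (x 2))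

end
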